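/- Fix a positive integer d. Then as x → ∞, the number of positive integers k ≤ x that are squarefree and coprime to d is asymptotically (6/π²) · x · ∏_{p | d} (1 + 1/p)^{−1}; that is, the limit as x → ∞ of (1/x)·#{k ≤ x : k squarefree, gcd(k, d) = 1} equals (6/π²)·∏_{p | d} p/(p+1), the product being over the primes p dividing d. -/

import Mathlib

open Filter Finset ArithmeticFunction
open scoped ArithmeticFunction.Moebius

namespace SqfDensity

lemma abs_mu_real (e : ℕ) : |(μ e : ℝ)| ≤ 1 := by
  have : |(μ e : ℝ)| = ((|μ e| : ℤ) : ℝ) := by push_cast; rfl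
  rw [this]; exact_mod_cast ArithmeticFunction.abs_moebius_le_one

lemma abs_mu_div_le (e : ℕ) : |(μ e : ℝ) / (e : ℝ) ^ 2| ≤ ((e:ℝ)^2)⁻¹ := by
  rw [abs_div, div_eq_mul_inv, abs_of_nonneg (a := (e:ℝ)^2) (by positivity)]
  calc |(μ e : ℝ)| * ((e:ℝ)^2)⁻¹ ≤ 1 * ((e:ℝ)^2)⁻¹ :=
        mul_le_mul_of_nonneg_right (abs_mu_real e) (by positivity)
  _ = ((e:ℝ)^2)⁻¹ := one_mul _

lemma summable_of_abs_le {f : ℕ → ℝ} (h : ∀ e, |f e| ≤ ((e:ℝ)^2)⁻¹) : Summable f := by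
  apply Summable.of_norm_bounded (Real.summable_nat_pow_inv.mpr one_lt_two)
  intro e; rw [Real.norm_eq_abs]; exact h e

lemma abs_ite_le {Q : Prop} [Decidable Q] (e : ℕ) :
    |if Q then (μ e : ℝ) / (e:ℝ)^2 else 0| ≤ ((e:ℝ)^2)⁻¹ := by
  split
  · exact abs_mu_div_le e
  · simp

lemma coprime_iff_forall {k d : ℕ} (hd : d ≠ 0) :
    Nat.Coprime k d ↔ ∀ p ∈ d.primeFactors, ¬ p ∣ k := by
  constructor
  · intro h p hp hpk
    have hpd := Nat.dvd_of_mem_primeFactors hp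
    have hp' := Nat.prime_of_mem_primeFactors hp
    have : p ∣ Nat.gcd k d := Nat.dvd_gcd hpk hpd
    rw [Nat.Coprime] at h
    rw [h] at this
    exact hp'.one_lt.ne' (Nat.eq_one_of_dvd_one this ▸ rfl)
  · intro h
    rw [Nat.coprime_comm]
    by_contra hc
    obtain ⟨p, hp, hpd, hpk⟩ := Nat.Prime.not_coprime_iff_dvd.mp hc
    exact h p (Nat.mem_primeFactors.mpr ⟨hp, hpd, hd⟩) hpk

lemma gcd_divisors_eq {j d : ℕ} (hd : d ≠ 0) (hj : j ≠ 0) :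
    (Nat.gcd j d).divisors = d.divisors.filter (fun f => f ∣ j) := by
  ext f
  simp only [Nat.mem_divisors, Finset.mem_filter, Nat.dvd_gcd_iff]
  constructor
  · rintro ⟨⟨h1, h2⟩, -⟩; exact ⟨⟨h2, hd⟩, h1⟩
  · rintro ⟨⟨h2, -⟩, h1⟩; exact ⟨⟨h1, h2⟩, Nat.gcd_ne_zero_left hj⟩

noncomputable def rho (d : ℕ) : ℝ := ∑ f ∈ d.divisors, (μ f : ℝ) / f

lemma rho_bound (d : ℕ) : |rho d| ≤ d.divisors.card := by
  calc |rho d| ≤ ∑ f ∈ d.divisors, |(μ f : ℝ) / f| := Finset.abs_sum_le_sum_abs _ _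
  _ ≤ ∑ f ∈ d.divisors, 1 := by
      refine Finset.sum_le_sum fun f hf => ?_
      have hf1 : 1 ≤ f := (Nat.pos_of_mem_divisors hf)
      rw [abs_div]
      have h1 : |(μ f : ℝ)| ≤ 1 := by
        have := ArithmeticFunction.abs_moebius_le_one (n := f)
        have : |(μ f : ℝ)| = ((|μ f| : ℤ) : ℝ) := by push_cast; rfl
        rw [this]; exact_mod_cast ArithmeticFunction.abs_moebius_le_one
      have h2 : (1:ℝ) ≤ |(f:ℝ)| := by
        rw [abs_of_nonneg (by positivity)]; exact_mod_cast hf1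
      calc |(μ f : ℝ)| / |(f:ℝ)| ≤ 1 / 1 :=
            div_le_div₀ zero_le_one h1 zero_lt_one h2
      _ = 1 := by norm_num
  _ = d.divisors.card := by simp

noncomputable def g (d : ℕ) (e : ℕ) : ℝ :=
  if Nat.Coprime e d then (μ e : ℝ) / (e : ℝ) ^ 2 else 0

lemma summable_g (d : ℕ) : Summable (g d) :=
  summable_of_abs_le fun e => by unfold g; exact abs_ite_le e

def C (d M : ℕ) : ℕ := ((Finset.Ioc 0 M).filter (fun j => Nat.Coprime j d)).card

lemma C_eq (d M : ℕ) (hd : d ≠ 0) :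
    (C d M : ℤ) = ∑ f ∈ d.divisors, μ f * (M / f : ℕ) := by
  have key : ∀ j ∈ Finset.Ioc 0 M, ((if Nat.Coprime j d then 1 else 0 : ℤ))
      = ∑ f ∈ d.divisors, if f ∣ j then μ f else 0 := by
    intro j hj
    have hj0 : j ≠ 0 := (Finset.mem_Ioc.mp hj).1.ne'
    rw [← Finset.sum_filter, ← gcd_divisors_eq hd hj0]
    have := congrArg (fun F : ArithmeticFunction ℤ => F (Nat.gcd j d))
      ArithmeticFunction.moebius_mul_coe_zeta
    simp only [ArithmeticFunction.coe_mul_zeta_apply, ArithmeticFunction.one_apply] at this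
    have h2 : (if Nat.Coprime j d then (1:ℤ) else 0) = if Nat.gcd j d = 1 then 1 else 0 := by
      simp [Nat.Coprime]
    rw [h2, ← this]
  calc (C d M : ℤ) = ∑ j ∈ Finset.Ioc 0 M, (if Nat.Coprime j d then 1 else 0 : ℤ) := by
        rw [C, Finset.card_filter]; push_cast; rfl
  _ = ∑ j ∈ Finset.Ioc 0 M, ∑ f ∈ d.divisors, (if f ∣ j then μ f else 0) :=
        Finset.sum_congr rfl key
  _ = ∑ f ∈ d.divisors, ∑ j ∈ Finset.Ioc 0 M, (if f ∣ j then μ f else 0) := Finset.sum_comm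
  _ = ∑ f ∈ d.divisors, μ f * (M / f : ℕ) := by
        refine Finset.sum_congr rfl fun f hf => ?_
        rw [← Finset.sum_filter, Finset.sum_const, Nat.Ioc_filter_dvd_card_eq_div]
        rw [nsmul_eq_mul, mul_comm]

lemma nat_div_err (M f : ℕ) (hf : 0 < f) : |((M / f : ℕ) : ℝ) - (M : ℝ) / f| ≤ 1 := by
  rw [abs_le]
  have hfR : (0:ℝ) < f := by exact_mod_cast hf
  constructor
  · have h1 : (M:ℝ)/f ≤ (M/f : ℕ) + 1 := by
      rw [div_le_iff₀ hfR]
      have h1 := Nat.div_add_mod M f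
      have h2 := Nat.mod_lt M hf
      have h1' : (M:ℝ) = f * ((M/f : ℕ):ℝ) + ((M % f : ℕ):ℝ) := by exact_mod_cast congrArg (Nat.cast (R := ℝ)) h1.symm
      have h2' : ((M % f : ℕ):ℝ) < f := by exact_mod_cast h2
      nlinarith
    linarith
  · have h2 : ((M/f : ℕ):ℝ) ≤ (M:ℝ)/f := Nat.cast_div_le
    linarith

lemma C_bound (d M : ℕ) (hd : d ≠ 0) :
    |(C d M : ℝ) - rho d * M| ≤ d.divisors.card := by
  have hC : (C d M : ℝ) = ∑ f ∈ d.divisors, (μ f : ℝ) * ((M / f : ℕ) : ℝ) := by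
    have := C_eq d M hd
    have h2 := congrArg (fun z : ℤ => (z : ℝ)) this
    push_cast at h2
    exact h2
  rw [hC, rho, Finset.sum_mul, ← Finset.sum_sub_distrib]
  calc |∑ f ∈ d.divisors, ((μ f : ℝ) * (M/f : ℕ) - (μ f : ℝ)/f * M)|
      ≤ ∑ f ∈ d.divisors, |(μ f : ℝ) * (M/f : ℕ) - (μ f : ℝ)/f * M| :=
        Finset.abs_sum_le_sum_abs _ _
  _ ≤ ∑ f ∈ d.divisors, 1 := by
      refine Finset.sum_le_sum fun f hf => ?_
      have hf0 : 0 < f := Nat.pos_of_mem_divisors hf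
      have : (μ f : ℝ) * (M/f : ℕ) - (μ f : ℝ)/f * M
          = (μ f : ℝ) * (((M/f : ℕ) : ℝ) - (M:ℝ)/f) := by ring
      rw [this, abs_mul]
      calc |(μ f : ℝ)| * |((M/f : ℕ):ℝ) - (M:ℝ)/f| ≤ 1 * 1 :=
            mul_le_mul (abs_mu_real f) (nat_div_err M f hf0) (abs_nonneg _) zero_le_one
      _ = 1 := by norm_num
  _ = d.divisors.card := by simp

lemma sq_dvd_sum_moebius {k : ℕ} (hk : k ≠ 0) :
    ∑ e ∈ k.divisors.filter (fun e => e ^ 2 ∣ k), μ e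
      = if Squarefree k then 1 else 0 := by
  obtain ⟨a, b, hab, ha⟩ := Nat.sq_mul_squarefree k
  have hb0 : b ≠ 0 := by rintro rfl; simp at hab; exact hk hab.symm
  have ha0 : a ≠ 0 := by rintro rfl; simp at hab; exact hk hab.symm
  -- the filter set is exactly the divisors of b
  have hset : k.divisors.filter (fun e => e ^ 2 ∣ k) = b.divisors := by
    ext e
    simp only [Finset.mem_filter, Nat.mem_divisors]
    constructor
    · rintro ⟨⟨hek, -⟩, he2⟩
      refine ⟨?_, hb0⟩
      have he0 : e ≠ 0 := by rintro rfl; rw [zero_pow (by norm_num)] at he2; exact hk (zero_dvd_iff.mp he2)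
      rw [← Nat.factorization_le_iff_dvd he0 hb0]
      intro p
      have h2 : (e ^ 2).factorization p ≤ k.factorization p :=
        (Nat.factorization_le_iff_dvd (pow_ne_zero 2 he0) hk).mpr he2 p
      rw [Nat.factorization_pow] at h2
      have hk2 : k.factorization p = 2 * b.factorization p + a.factorization p := by
        rw [← hab, Nat.factorization_mul (pow_ne_zero 2 hb0) ha0, Nat.factorization_pow]
        simp
      have ha1 : a.factorization p ≤ 1 :=
        (Nat.squarefree_iff_factorization_le_one ha0).mp ha p
      simp only [Finsupp.smul_apply, smul_eq_mul, Finsupp.add_apply] at h2 hk2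
      omega
    · rintro ⟨heb, -⟩
      have h2 : e ^ 2 ∣ k := by
        rw [← hab]; exact Dvd.dvd.mul_right (pow_dvd_pow_of_dvd heb 2) a
      exact ⟨⟨(dvd_pow_self e two_ne_zero).trans h2, hk⟩, h2⟩
  rw [hset]
  have hsum : ∑ e ∈ b.divisors, μ e = if b = 1 then 1 else 0 := by
    have := congrArg (fun F : ArithmeticFunction ℤ => F b)
      ArithmeticFunction.moebius_mul_coe_zeta
    simpa only [ArithmeticFunction.coe_mul_zeta_apply, ArithmeticFunction.one_apply] using this
  rw [hsum]
  congr 1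
  rw [eq_iff_iff]
  constructor
  · rintro rfl
    rw [← hab]; simpa using ha
  · intro hs
    by_contra hb1
    obtain ⟨p, hp, hpb⟩ := Nat.exists_prime_and_dvd hb1
    have : p * p ∣ k := by
      rw [← hab, pow_two]
      exact Dvd.dvd.mul_right (mul_dvd_mul hpb hpb) a
    exact hp.one_lt.ne' (Nat.isUnit_iff.mp (hs p this))

def S (d N : ℕ) : ℕ :=
  ((Finset.Ioc 0 N).filter (fun k => Squarefree k ∧ Nat.Coprime k d)).card

lemma count_multiples (d N e : ℕ) (he : Nat.Coprime e d) (he0 : 0 < e) :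
    (((Finset.Ioc 0 N).filter (fun k => Nat.Coprime k d)).filter (fun k => e ^ 2 ∣ k)).card
      = C d (N / e ^ 2) := by
  have he2 : 0 < e ^ 2 := by positivity
  rw [C]
  apply Finset.card_bij (fun k _ => k / e ^ 2)
  · intro k hk
    simp only [Finset.mem_filter, Finset.mem_Ioc] at hk ⊢
    obtain ⟨⟨⟨hk0, hkN⟩, hkd⟩, hek⟩ := hk
    obtain ⟨j, rfl⟩ := hek
    rw [Nat.mul_div_cancel_left j he2]
    have hj0 : j ≠ 0 := by rintro rfl; simp at hk0
    refine ⟨⟨Nat.pos_of_ne_zero hj0, ?_⟩, ?_⟩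
    · rw [Nat.le_div_iff_mul_le he2, mul_comm]; exact hkN
    · exact Nat.Coprime.coprime_dvd_left (Dvd.intro_left _ rfl) hkd
  · intro k1 hk1 k2 hk2 h
    simp only [Finset.mem_filter, Finset.mem_Ioc] at hk1 hk2
    obtain ⟨-, j1, rfl⟩ := hk1
    obtain ⟨-, j2, rfl⟩ := hk2
    rw [Nat.mul_div_cancel_left j1 he2, Nat.mul_div_cancel_left j2 he2] at h
    rw [h]
  · intro j hj
    simp only [Finset.mem_filter, Finset.mem_Ioc] at hj
    obtain ⟨⟨hj0, hjN⟩, hjd⟩ := hj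
    refine ⟨e ^ 2 * j, ?_, ?_⟩
    · simp only [Finset.mem_filter, Finset.mem_Ioc]
      refine ⟨⟨⟨by positivity, ?_⟩, ?_⟩, Dvd.intro j rfl⟩
      · rw [Nat.le_div_iff_mul_le he2, mul_comm] at hjN; exact hjN
      · exact Nat.Coprime.mul (he.pow_left 2) hjd
    · rw [Nat.mul_div_cancel_left j he2]

lemma S_eq (d N : ℕ) :
    (S d N : ℤ) = ∑ e ∈ (Finset.Ioc 0 N.sqrt).filter (fun e => Nat.Coprime e d),
      μ e * (C d (N / e ^ 2) : ℤ) := by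
  set K := (Finset.Ioc 0 N).filter (fun k => Nat.Coprime k d) with hK
  have step1 : (S d N : ℤ) = ∑ k ∈ K, (if Squarefree k then 1 else 0 : ℤ) := by
    have hfe : ((Finset.Ioc 0 N).filter (fun k => Squarefree k ∧ Nat.Coprime k d))
        = K.filter (fun k => Squarefree k) := by
      rw [hK, Finset.filter_filter]
      apply Finset.filter_congr; intro k _; simp [and_comm]
    rw [S, hfe, Finset.card_filter]; push_cast; rfl
  rw [step1]
  have step2 : ∀ k ∈ K, (if Squarefree k then 1 else 0 : ℤ)
      = ∑ e ∈ (Finset.Ioc 0 N.sqrt).filter (fun e => Nat.Coprime e d),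
          (if e ^ 2 ∣ k then μ e else 0) := by
    intro k hk
    simp only [hK, Finset.mem_filter, Finset.mem_Ioc] at hk
    obtain ⟨⟨hk0, hkN⟩, hkd⟩ := hk
    rw [← sq_dvd_sum_moebius hk0.ne', ← Finset.sum_filter]
    apply Finset.sum_congr _ (fun _ _ => rfl)
    ext e
    simp only [Finset.mem_filter, Nat.mem_divisors, Finset.mem_Ioc]
    constructor
    · rintro ⟨⟨hek, -⟩, he2⟩
      have he0 : 0 < e := Nat.pos_of_dvd_of_pos hek hk0
      refine ⟨⟨⟨he0, ?_⟩, ?_⟩, he2⟩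
      · rw [Nat.le_sqrt]
        calc e * e = e ^ 2 := (sq e).symm
        _ ≤ k := Nat.le_of_dvd hk0 he2
        _ ≤ N := hkN
      · exact Nat.Coprime.coprime_dvd_left hek hkd
    · rintro ⟨⟨⟨he0, heN⟩, hed⟩, he2⟩
      exact ⟨⟨(dvd_pow_self e two_ne_zero).trans he2, hk0.ne'⟩, he2⟩
  rw [Finset.sum_congr rfl step2, Finset.sum_comm]
  refine Finset.sum_congr rfl fun e he => ?_
  simp only [Finset.mem_filter, Finset.mem_Ioc] at he
  obtain ⟨⟨he0, heN⟩, hed⟩ := he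
  rw [← Finset.sum_filter, Finset.sum_const, ← count_multiples d N e hed he0]
  rw [nsmul_eq_mul, mul_comm]

lemma tsum_moebius : ∑' e : ℕ, (μ e : ℝ) / (e : ℝ) ^ 2 = 6 / Real.pi ^ 2 := by
  have h2 : (1:ℝ) < (2:ℂ).re := by norm_num
  have hL : LSeries (fun n => (μ n : ℂ)) 2 = (riemannZeta 2)⁻¹ := by
    have := LSeries_zeta_mul_Lseries_moebius (s := 2) h2
    rw [LSeries_zeta_eq_riemannZeta h2] at this
    exact eq_inv_of_mul_eq_one_left (by rw [mul_comm]; exact this)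
  have hterm : ∀ n : ℕ, LSeries.term (fun n => (μ n : ℂ)) 2 n
      = (((μ n : ℝ) / (n : ℝ) ^ 2 : ℝ) : ℂ) := by
    intro n
    rcases eq_or_ne n 0 with rfl | hn
    · simp [LSeries.term]
    · rw [LSeries.term_of_ne_zero hn]
      rw [show ((n:ℂ) ^ (2:ℂ)) = (n:ℂ) ^ (2:ℕ) by
        rw [← Complex.cpow_natCast]; norm_num]
      push_cast
      rfl
  have : ((∑' e : ℕ, (μ e : ℝ) / (e : ℝ) ^ 2 : ℝ) : ℂ) = (riemannZeta 2)⁻¹ := by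
    rw [Complex.ofReal_tsum, ← hL, LSeries]
    exact tsum_congr fun n => (hterm n).symm
  rw [riemannZeta_two] at this
  have hpi : (Real.pi : ℂ) ^ 2 / 6 = (((Real.pi ^ 2 / 6 : ℝ)) : ℂ) := by push_cast; rfl
  rw [hpi, ← Complex.ofReal_inv] at this
  have := Complex.ofReal_injective this
  rw [this, inv_div]

open Classical in
lemma tsum_indicator (P : Finset ℕ) (hP : ∀ p ∈ P, p.Prime) :
    ∑' e : ℕ, (if ∀ p ∈ P, ¬ p ∣ e then (μ e : ℝ) / (e:ℝ)^2 else 0)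
      = (6 / Real.pi^2) * ∏ p ∈ P, (1 - ((p:ℝ)⁻¹) ^ 2)⁻¹ := by
  induction P using Finset.induction with
  | empty => simp [tsum_moebius]
  | @insert p P hpP ih =>
    have hp : p.Prime := hP p (Finset.mem_insert_self p P)
    have hPP : ∀ q ∈ P, q.Prime := fun q hq => hP q (Finset.mem_insert_of_mem hq)
    have hp0 : (0:ℝ) < p := by exact_mod_cast hp.pos
    have hne : (1 : ℝ) - ((p:ℝ)⁻¹) ^ 2 ≠ 0 := by
      have h2 : (2:ℝ) ≤ p := by exact_mod_cast hp.two_le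
      have : ((p:ℝ)⁻¹) ^ 2 < 1 := by
        rw [inv_pow]
        apply inv_lt_one_of_one_lt₀
        nlinarith
      linarith
    set fP := fun e : ℕ => if ∀ q ∈ P, ¬ q ∣ e then (μ e : ℝ) / (e:ℝ)^2 else 0 with hfP
    set fP' := fun e : ℕ => if ∀ q ∈ insert p P, ¬ q ∣ e then (μ e : ℝ) / (e:ℝ)^2 else 0 with hfP'
    have hsplit : ∀ e, fP e = fP' e + (if p ∣ e then fP e else 0) := by
      intro e
      by_cases hpe : p ∣ e
      · have : ¬ (∀ q ∈ insert p P, ¬ q ∣ e) := by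
          push_neg; exact ⟨p, Finset.mem_insert_self p P, hpe⟩
        simp only [hfP', if_neg this, if_pos hpe, zero_add]
      · have hiff : (∀ q ∈ insert p P, ¬ q ∣ e) ↔ (∀ q ∈ P, ¬ q ∣ e) := by
          constructor
          · intro h q hq; exact h q (Finset.mem_insert_of_mem hq)
          · intro h q hq
            rcases Finset.mem_insert.mp hq with rfl | hq'
            · exact hpe
            · exact h q hq'
        simp only [hfP, hfP', if_neg hpe, add_zero]
        congr 1
        exact propext hiff.symm
    have hkey : ∀ e' : ℕ, (if p ∣ p * e' then fP (p * e') else 0)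
        = -((p:ℝ)⁻¹ ^ 2) * fP' e' := by
      intro e'
      rw [if_pos (Dvd.intro e' rfl)]
      by_cases hpe' : p ∣ e'
      · have h1 : ¬ Squarefree (p * e') := by
          intro hs
          exact hp.one_lt.ne' (Nat.isUnit_iff.mp (hs p (by
            obtain ⟨c, rfl⟩ := hpe'; exact ⟨c, by ring⟩)))
        have h2 : ¬ (∀ q ∈ insert p P, ¬ q ∣ e') := by
          push_neg; exact ⟨p, Finset.mem_insert_self p P, hpe'⟩
        simp only [hfP, hfP', ArithmeticFunction.moebius_eq_zero_of_not_squarefree h1,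
          if_neg h2]
        simp
      · have hcop : Nat.Coprime p e' := (Nat.Prime.coprime_iff_not_dvd hp).mpr hpe'
        have hmu : μ (p * e') = μ p * μ e' :=
          isMultiplicative_moebius.map_mul_of_coprime hcop
        have hiff : (∀ q ∈ P, ¬ q ∣ p * e') ↔ (∀ q ∈ insert p P, ¬ q ∣ e') := by
          constructor
          · intro h q hq
            rcases Finset.mem_insert.mp hq with rfl | hq'
            · exact hpe'
            · intro hqe'; exact h q hq' (hqe'.mul_left p)
          · intro h q hq hqpe'
            rcases (Nat.Prime.dvd_mul (hPP q hq)).mp hqpe' with hqp | hqe'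
            · have : q = p := ((Nat.prime_dvd_prime_iff_eq (hPP q hq) hp).mp hqp)
              exact hpP (this ▸ hq)
            · exact h q (Finset.mem_insert_of_mem hq) hqe'
        simp only [hfP, hfP']
        rw [if_congr hiff rfl rfl]
        split
        · rw [hmu, ArithmeticFunction.moebius_apply_prime hp]
          push_cast
          rcases eq_or_ne e' 0 with rfl | he'0
          · simp
          · have he'R : (0:ℝ) < e' := by exact_mod_cast Nat.pos_of_ne_zero he'0
            field_simp
            try ring
            try tauto
        · simp
    have hsum_fP' : Summable fP' :=
      summable_of_abs_le fun e => by rw [hfP']; exact abs_ite_le e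
    have hsum_ind : Summable (fun e => if p ∣ e then fP e else 0) :=
      summable_of_abs_le fun e => by
        rw [hfP]
        by_cases hpe : p ∣ e
        · rw [if_pos hpe]; exact abs_ite_le e
        · rw [if_neg hpe]; simp
    have htsum_ind : ∑' e, (if p ∣ e then fP e else 0) = -((p:ℝ)⁻¹ ^ 2) * ∑' e, fP' e := by
      have hinj : Function.Injective (fun e' : ℕ => p * e') := fun a b h =>
        Nat.eq_of_mul_eq_mul_left hp.pos h
      have hsupp : Function.support (fun e => if p ∣ e then fP e else 0)
          ⊆ Set.range (fun e' : ℕ => p * e') := by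
        intro e he
        simp only [Function.mem_support] at he
        by_cases hpe : p ∣ e
        · obtain ⟨c, rfl⟩ := hpe; exact ⟨c, rfl⟩
        · rw [if_neg hpe] at he; exact absurd rfl he
      rw [← Function.Injective.tsum_eq hinj hsupp]
      rw [tsum_congr hkey, tsum_mul_left]
    have heq : ∑' e, fP e = (1 - (p:ℝ)⁻¹ ^ 2) * ∑' e, fP' e := by
      rw [tsum_congr hsplit, Summable.tsum_add hsum_fP' hsum_ind, htsum_ind]
      ring
    rw [ih hPP] at heq
    have hval : ∑' e, fP' e
        = (6 / Real.pi^2 * ∏ q ∈ P, (1 - ((q:ℝ)⁻¹)^2)⁻¹) / (1 - ((p:ℝ)⁻¹)^2) := by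
      rw [eq_div_iff hne]; linarith [heq]
    rw [hval, Finset.prod_insert hpP, div_eq_mul_inv]; ring

noncomputable def invFun' : ArithmeticFunction ℝ :=
  ⟨fun n => if n = 0 then 0 else (n : ℝ)⁻¹, by simp⟩

lemma invFun'_isMult : invFun'.IsMultiplicative := by
  constructor
  · simp [invFun']
  · intro m n _
    rcases eq_or_ne m 0 with rfl | hm
    · simp [invFun']
    rcases eq_or_ne n 0 with rfl | hn
    · simp [invFun']
    simp only [invFun', ArithmeticFunction.coe_mk, mul_eq_zero, if_neg hm, if_neg hn]
    rw [if_neg (by simp [hm, hn]), Nat.cast_mul, mul_inv]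

lemma rho_eq (d : ℕ) (hd : Squarefree d) :
    rho d = ∏ p ∈ d.primeFactors, (1 - (p:ℝ)⁻¹) := by
  have := ArithmeticFunction.IsMultiplicative.prodPrimeFactors_one_sub_of_squarefree
    invFun' invFun'_isMult hd
  rw [rho]
  rw [show ∏ p ∈ d.primeFactors, (1 - (p:ℝ)⁻¹) = ∏ p ∈ d.primeFactors, (1 - invFun' p) from ?_]
  · rw [this]
    refine Finset.sum_congr rfl fun f hf => ?_
    have hf0 : f ≠ 0 := (Nat.pos_of_mem_divisors hf).ne'
    simp only [invFun', ArithmeticFunction.coe_mk, if_neg hf0, ArithmeticFunction.intCoe_apply]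
    rw [div_eq_mul_inv]
  · refine Finset.prod_congr rfl fun p hp => ?_
    have hp0 : p ≠ 0 := (Nat.prime_of_mem_primeFactors hp).pos.ne'
    simp [invFun', if_neg hp0]

lemma S_tendsto (d : ℕ) (hd : d ≠ 0) :
    Tendsto (fun N : ℕ => (S d N : ℝ) / N) atTop (nhds (rho d * ∑' e, g d e)) := by
  set D : ℝ := (d.divisors.card : ℝ) with hD
  have hD0 : 0 ≤ D := by positivity
  -- partial sums of g
  set A : ℕ → ℝ := fun N => ∑ e ∈ Finset.range (N.sqrt + 1), g d e with hA
  have hAt : Tendsto A atTop (nhds (∑' e, g d e)) := by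
    have h1 : Tendsto (fun n : ℕ => ∑ e ∈ Finset.range n, g d e) atTop
        (nhds (∑' e, g d e)) := (summable_g d).hasSum.tendsto_sum_nat
    have h2 : Tendsto (fun N : ℕ => N.sqrt + 1) atTop atTop := by
      apply tendsto_atTop_atTop_of_monotone
      · exact fun a b h => Nat.add_le_add_right (Nat.sqrt_le_sqrt h) 1
      · intro b; exact ⟨b ^ 2, by rw [Nat.sqrt_eq']; omega⟩
    exact h1.comp h2
  have hsqt : Tendsto (fun N : ℕ => N.sqrt) atTop atTop := by
    apply tendsto_atTop_atTop_of_monotone (fun a b h => Nat.sqrt_le_sqrt h)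
    intro b; exact ⟨b ^ 2, by rw [Nat.sqrt_eq']⟩
  -- key bound
  have key : ∀ N : ℕ, 1 ≤ N → |(S d N : ℝ) / N - rho d * A N| ≤ 2 * D * N.sqrt / N := by
    intro N hN
    have hN0 : (0:ℝ) < N := by exact_mod_cast hN
    have hScast : (S d N : ℝ) = ∑ e ∈ (Finset.Ioc 0 N.sqrt).filter (fun e => Nat.Coprime e d),
        (μ e : ℝ) * (C d (N / e ^ 2) : ℝ) := by
      have := congrArg (fun z : ℤ => (z : ℝ)) (S_eq d N)
      push_cast at this
      exact this
    -- rewrite A over the filtered set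
    have hAeq : A N = ∑ e ∈ (Finset.Ioc 0 N.sqrt).filter (fun e => Nat.Coprime e d),
        (μ e : ℝ) / (e:ℝ)^2 := by
      show ∑ e ∈ Finset.range (N.sqrt + 1), g d e = _
      have hins : Finset.range (N.sqrt + 1) = insert 0 (Finset.Ioc 0 N.sqrt) := by
        ext x
        simp only [Finset.mem_range, Finset.mem_insert, Finset.mem_Ioc, Nat.lt_succ_iff]
        omega
      rw [hins, Finset.sum_insert (by simp)]
      have hg0 : g d 0 = 0 := by simp [g]
      rw [hg0, zero_add, Finset.sum_filter]
      exact Finset.sum_congr rfl fun x _ => by simp [g]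
    have hform : (S d N : ℝ) / N - rho d * A N
        = ((S d N : ℝ) - rho d * A N * N) / N := by
      field_simp
    rw [hform, abs_div, abs_of_nonneg hN0.le, div_le_div_iff_of_pos_right hN0]
    rw [hScast, hAeq, Finset.mul_sum, Finset.sum_mul, ← Finset.sum_sub_distrib]
    calc |∑ e ∈ (Finset.Ioc 0 N.sqrt).filter (fun e => Nat.Coprime e d),
          ((μ e : ℝ) * (C d (N / e ^ 2) : ℝ) - rho d * ((μ e : ℝ) / (e:ℝ)^2) * N)|
        ≤ ∑ e ∈ (Finset.Ioc 0 N.sqrt).filter (fun e => Nat.Coprime e d),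
          |(μ e : ℝ) * (C d (N / e ^ 2) : ℝ) - rho d * ((μ e : ℝ) / (e:ℝ)^2) * N| :=
          Finset.abs_sum_le_sum_abs _ _
    _ ≤ ∑ e ∈ (Finset.Ioc 0 N.sqrt).filter (fun e => Nat.Coprime e d), 2 * D := by
        refine Finset.sum_le_sum fun e he => ?_
        simp only [Finset.mem_filter, Finset.mem_Ioc] at he
        obtain ⟨⟨he0, heN⟩, -⟩ := he
        have he2 : (0:ℕ) < e ^ 2 := by positivity
        have he2R : (0:ℝ) < (e:ℝ)^2 := by positivity
        have hsplit : (μ e : ℝ) * (C d (N / e ^ 2) : ℝ) - rho d * ((μ e : ℝ) / (e:ℝ)^2) * N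
            = (μ e : ℝ) * ((C d (N / e ^ 2) : ℝ) - rho d * ((N / e^2 : ℕ) : ℝ))
              + (μ e : ℝ) * rho d * (((N / e^2 : ℕ) : ℝ) - (N:ℝ) / (e:ℝ)^2) := by
          push_cast
          ring
        rw [hsplit]
        calc _ ≤ |(μ e : ℝ) * ((C d (N / e ^ 2) : ℝ) - rho d * ((N / e^2 : ℕ) : ℝ))|
              + |(μ e : ℝ) * rho d * (((N / e^2 : ℕ) : ℝ) - (N:ℝ) / (e:ℝ)^2)| := abs_add_le _ _
        _ ≤ 1 * D + 1 * D * 1 := by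
            apply add_le_add
            · rw [abs_mul]
              apply mul_le_mul (abs_mu_real e) ?_ (abs_nonneg _) zero_le_one
              exact C_bound d _ hd
            · rw [abs_mul, abs_mul]
              apply mul_le_mul
              · exact mul_le_mul (abs_mu_real e) (rho_bound d) (abs_nonneg _) zero_le_one
              · have := nat_div_err N (e^2) he2
                calc |((N / e^2 : ℕ):ℝ) - (N:ℝ)/(e:ℝ)^2|
                    = |((N / e^2 : ℕ):ℝ) - (N:ℝ)/((e^2 : ℕ):ℝ)| := by push_cast; ring_nf
                _ ≤ 1 := this
              · exact abs_nonneg _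
              · positivity
        _ = 2 * D := by ring
    _ ≤ 2 * D * N.sqrt := by
        rw [Finset.sum_const, nsmul_eq_mul]
        have hcard : ((Finset.Ioc 0 N.sqrt).filter (fun e => Nat.Coprime e d)).card
            ≤ N.sqrt := by
          calc _ ≤ (Finset.Ioc 0 N.sqrt).card := Finset.card_filter_le _ _
          _ = N.sqrt := by simp
        calc (((Finset.Ioc 0 N.sqrt).filter (fun e => Nat.Coprime e d)).card : ℝ) * (2 * D)
            ≤ (N.sqrt : ℝ) * (2 * D) := by
              apply mul_le_mul_of_nonneg_right _ (by positivity)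
              exact_mod_cast hcard
        _ = 2 * D * N.sqrt := by ring
  -- error tends to zero
  have herr : Tendsto (fun N : ℕ => (S d N : ℝ) / N - rho d * A N) atTop (nhds 0) := by
    have h1 : Tendsto (fun N : ℕ => (N.sqrt : ℝ) / N) atTop (nhds 0) := by
      have hinv : Tendsto (fun N : ℕ => ((N.sqrt : ℝ))⁻¹) atTop (nhds 0) :=
        tendsto_inv_atTop_zero.comp (tendsto_natCast_atTop_atTop.comp hsqt)
      refine squeeze_zero_norm' ?_ hinv
      filter_upwards [eventually_ge_atTop 1] with N hN
      have hN0 : (0:ℝ) < N := by exact_mod_cast hN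
      have hs1 : 1 ≤ N.sqrt := by
        rw [Nat.one_le_iff_ne_zero, Ne, Nat.sqrt_eq_zero]; omega
      have hsR : (0:ℝ) < (N.sqrt:ℝ) := by exact_mod_cast hs1
      have hsq : (N.sqrt:ℝ) * (N.sqrt:ℝ) ≤ N := by exact_mod_cast Nat.sqrt_le N
      rw [Real.norm_eq_abs, abs_of_nonneg (by positivity)]
      rw [div_le_iff₀ hN0]
      rw [inv_mul_eq_div, le_div_iff₀ hsR]
      nlinarith
    have h2 := h1.const_mul (2 * D)
    rw [mul_zero] at h2
    refine squeeze_zero_norm' ?_ (by simpa [mul_div_assoc] using h2)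
    filter_upwards [eventually_ge_atTop 1] with N hN
    rw [Real.norm_eq_abs, ← mul_div_assoc]
    exact key N hN
  have : Tendsto (fun N : ℕ => rho d * A N + ((S d N : ℝ) / N - rho d * A N)) atTop
      (nhds (rho d * ∑' e, g d e + 0)) := (hAt.const_mul (rho d)).add herr
  rw [add_zero] at this
  convert this using 2 with N
  ring

lemma squarefree_prod_primes {s : Finset ℕ} (hs : ∀ p ∈ s, p.Prime) :
    Squarefree (∏ p ∈ s, p) := by
  induction s using Finset.induction with
  | empty => simpa using squarefree_one
  | @insert p s hps ih =>
    rw [Finset.prod_insert hps]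
    have hp := hs p (Finset.mem_insert_self p s)
    have hs' : ∀ q ∈ s, q.Prime := fun q hq => hs q (Finset.mem_insert_of_mem hq)
    have hcop : Nat.Coprime p (∏ q ∈ s, q) :=
      Nat.Coprime.prod_right fun q hq =>
        (Nat.coprime_primes hp (hs' q hq)).mpr (by rintro rfl; exact hps hq)
    exact (Nat.squarefree_mul hcop).mpr ⟨hp.squarefree, ih hs'⟩

end SqfDensity

open SqfDensity in
/-- The density of squarefree integers coprime to a fixed `d` is
`(6/π²) · ∏_{p ∣ d} (1 + 1/p)⁻¹ = (6/π²) · ∏_{p ∣ d} p/(p+1)`. -/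
theorem squarefree_coprime_density (d : ℕ) (hd : 0 < d) :
    Tendsto (fun x : ℝ =>
        (Set.ncard {k : ℕ | 0 < k ∧ (k : ℝ) ≤ x ∧ Squarefree k ∧ Nat.Coprime k d} : ℝ) / x)
      atTop (nhds (6 / Real.pi ^ 2 * ∏ p ∈ d.primeFactors, (p : ℝ) / (p + 1))) := by
  classical
  set r : ℕ := ∏ p ∈ d.primeFactors, p with hr
  have hrP : ∀ p ∈ d.primeFactors, p.Prime := fun p hp => Nat.prime_of_mem_primeFactors hp
  have hrsf : Squarefree r := squarefree_prod_primes hrP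
  have hrfac : r.primeFactors = d.primeFactors := Nat.primeFactors_prod hrP
  have hr0 : r ≠ 0 := hrsf.ne_zero
  have hcop_iff : ∀ k, Nat.Coprime k d ↔ Nat.Coprime k r := by
    intro k
    rw [coprime_iff_forall hd.ne', coprime_iff_forall hr0, hrfac]
  -- the limit value
  have hval : rho r * ∑' e, g r e
      = 6 / Real.pi ^ 2 * ∏ p ∈ d.primeFactors, (p : ℝ) / (p + 1) := by
    have htg : ∑' e, g r e
        = (6 / Real.pi^2) * ∏ p ∈ d.primeFactors, (1 - ((p:ℝ)⁻¹) ^ 2)⁻¹ := by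
      rw [← hrfac]
      rw [show ∑' e, g r e = ∑' e : ℕ,
          (if ∀ p ∈ r.primeFactors, ¬ p ∣ e then (μ e : ℝ) / (e:ℝ)^2 else 0) from
        tsum_congr fun e => by
          simp only [g]
          exact if_congr (coprime_iff_forall hr0) rfl rfl]
      exact tsum_indicator r.primeFactors fun p hp => Nat.prime_of_mem_primeFactors hp
    rw [htg, rho_eq r hrsf, hrfac, ← mul_assoc, mul_comm (∏ p ∈ d.primeFactors, (1 - (p:ℝ)⁻¹)),
      mul_assoc, ← Finset.prod_mul_distrib]
    congr 1
    refine Finset.prod_congr rfl fun p hp => ?_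
    have hp2 : (2:ℝ) ≤ p := by exact_mod_cast (hrP p hp).two_le
    have hp0 : (0:ℝ) < p := by linarith
    have hp1 : (p:ℝ) + 1 ≠ 0 := by linarith
    have hpne : (p:ℝ) ≠ 0 := hp0.ne'
    have h3 : (1:ℝ) - ((p:ℝ)⁻¹)^2 = ((p+1)*(p-1))/(p:ℝ)^2 := by field_simp; ring
    have h4 : (1:ℝ) - (p:ℝ)⁻¹ = ((p:ℝ)-1)/p := by field_simp
    have h5 : (0:ℝ) < (p:ℝ) * (((p:ℝ)+1)*((p:ℝ)-1)) := by nlinarith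
    rw [h3, h4, inv_div, div_mul_div_comm, div_eq_div_iff h5.ne' hp1]
    ring
  rw [← hval]
  -- relate the set to the finset count
  have hset : ∀ x : ℝ, 0 ≤ x →
      (Set.ncard {k : ℕ | 0 < k ∧ (k : ℝ) ≤ x ∧ Squarefree k ∧ Nat.Coprime k d} : ℝ)
        = (S r ⌊x⌋₊ : ℝ) := by
    intro x hx
    have : {k : ℕ | 0 < k ∧ (k : ℝ) ≤ x ∧ Squarefree k ∧ Nat.Coprime k d}
        = ↑((Finset.Ioc 0 ⌊x⌋₊).filter (fun k => Squarefree k ∧ Nat.Coprime k r)) := by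
      ext k
      simp only [Set.mem_setOf_eq, Finset.coe_filter, Finset.mem_Ioc, Set.mem_setOf_eq]
      constructor
      · rintro ⟨h1, h2, h3, h4⟩
        exact ⟨⟨h1, Nat.le_floor h2⟩, h3, (hcop_iff k).mp h4⟩
      · rintro ⟨⟨h1, h2⟩, h3, h4⟩
        exact ⟨h1, le_trans (by exact_mod_cast Nat.cast_le.mpr h2) (Nat.floor_le hx),
          h3, (hcop_iff k).mpr h4⟩
    rw [this, Set.ncard_coe_finset]
    rfl
  -- limit
  have hlim1 : Tendsto (fun x : ℝ => (S r ⌊x⌋₊ : ℝ) / ⌊x⌋₊) atTop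
      (nhds (rho r * ∑' e, g r e)) :=
    (S_tendsto r hr0).comp tendsto_nat_floor_atTop
  have hlim2 : Tendsto (fun x : ℝ => (⌊x⌋₊ : ℝ) / x) atTop (nhds 1) :=
    tendsto_nat_floor_div_atTop
  have hlim := hlim1.mul hlim2
  rw [mul_one] at hlim
  apply hlim.congr'
  filter_upwards [eventually_ge_atTop (1:ℝ)] with x hx
  have hx0 : (0:ℝ) ≤ x := by linarith
  have hfl : 1 ≤ ⌊x⌋₊ := Nat.le_floor (by simpa using hx)
  have hflR : (0:ℝ) < (⌊x⌋₊ : ℝ) := by exact_mod_cast hfl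
  rw [hset x hx0]
  field_simp
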